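/- Let f : ℝ → ℝ admit an entire complex extension with Taylor coefficients c_k = f^{(k)}(0)/k!, let m ≥ 1 be an integer and a > 0. Then the limit as ε → 0⁺ of [∫_ε^a f(x) x^{-m} dx − (Σ_{k=0}^{m-2} c_k/((m-k-1) ε^{m-k-1}) − c_{m-1} ln ε)] exists and equals c_{m-1} ln a − Σ_{k=0}^{m-2} c_k/((m-k-1) a^{m-k-1}) + Σ_{k=m}^{∞} c_k a^{k-m+1}/(k-m+1), where an empty sum is zero and the infinite series converges. -/

import Mathlib

open Filter MeasureTheory Set

lemma hsR (F : ℂ → ℂ) (f : ℝ → ℝ) (c : ℕ → ℝ)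
    (hF : Differentiable ℂ F) (hFf : ∀ x : ℝ, F x = f x)
    (hc : ∀ k, (c k : ℂ) = iteratedDeriv k F 0 / (Nat.factorial k)) (x : ℝ) :
    HasSum (fun k => c k * x ^ k) (f x) := by
  have H := Complex.hasSum_taylorSeries_of_entire hF 0 x
  rw [hFf] at H
  rw [← Complex.hasSum_ofReal]
  convert H using 2 with n
  · rfl
  rw [Complex.ofReal_mul, Complex.ofReal_pow, hc n, smul_eq_mul, smul_eq_mul, sub_zero]
  ring

set_option maxHeartbeats 1000000 in
lemma absSummable (c : ℕ → ℝ)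
    (hs : ∀ x : ℝ, Summable (fun k => c k * x ^ k)) (r : ℝ) (hr : 0 ≤ r) :
    Summable (fun k => |c k| * r ^ k) := by
  have h1 : Summable (fun k => c k * (r + 1) ^ k) := hs _
  have h2 : Tendsto (fun k => |c k| * (r + 1) ^ k) atTop (nhds 0) := by
    have := h1.tendsto_atTop_zero.abs
    simp only [abs_zero, abs_mul, abs_pow, abs_of_nonneg (by linarith : (0:ℝ) ≤ r + 1)] at this
    exact this
  obtain ⟨C, hC⟩ := h2.bddAbove_range
  have hq : r / (r + 1) < 1 := by
    rw [div_lt_one (by linarith)]; linarith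
  refine Summable.of_nonneg_of_le (f := fun k => C * (r / (r + 1)) ^ k)
    (fun k => mul_nonneg (abs_nonneg _) (pow_nonneg hr k)) (fun k => ?_) ?_
  · have hCk : |c k| * (r + 1) ^ k ≤ C := hC ⟨k, rfl⟩
    have he : |c k| * r ^ k = (|c k| * (r + 1) ^ k) * (r / (r + 1)) ^ k := by
      rw [div_pow]; field_simp
    rw [he]
    exact mul_le_mul_of_nonneg_right hCk (pow_nonneg (div_nonneg hr (by linarith)) k)
  · exact (summable_geometric_of_lt_one (div_nonneg hr (by linarith)) hq).mul_left C

set_option maxHeartbeats 2000000 in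
/-- Finite part of `∫_0^a f(x)/x^m dx` for `f` with entire complex extension:
the regularized limit exists and has the stated series value. -/
theorem stmt_0 (f : ℝ → ℝ) (F : ℂ → ℂ) (c : ℕ → ℝ)
    (hF : Differentiable ℂ F) (hFf : ∀ x : ℝ, F x = f x)
    (hc : ∀ k, (c k : ℂ) = iteratedDeriv k F 0 / (Nat.factorial k))
    (m : ℕ) (hm : 1 ≤ m) (a : ℝ) (ha : 0 < a) :
    ∃ S : ℝ,
      HasSum (fun j : ℕ => c (m + j) * a ^ (j + 1) / (j + 1)) S ∧
      Tendsto
        (fun ε : ℝ =>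
          (∫ x in ε..a, f x / x ^ m) -
            ((∑ k ∈ Finset.range (m - 1),
                c k / (((m - k - 1 : ℕ) : ℝ) * ε ^ (m - k - 1))) -
              c (m - 1) * Real.log ε))
        (nhdsWithin 0 (Set.Ioi 0))
        (nhds (c (m - 1) * Real.log a -
          (∑ k ∈ Finset.range (m - 1),
              c k / (((m - k - 1 : ℕ) : ℝ) * a ^ (m - k - 1))) + S)) := by
  obtain ⟨n, rfl⟩ : ∃ n, m = n + 1 := ⟨m - 1, (Nat.succ_pred_eq_of_pos hm).symm⟩
  have hs : ∀ x : ℝ, HasSum (fun k => c k * x ^ k) (f x) := hsR F f c hF hFf hc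
  have habs : ∀ r : ℝ, 0 ≤ r → Summable fun k => |c k| * r ^ k :=
    fun r hr => absSummable c (fun x => (hs x).summable) r hr
  -- tail summability in absolute value
  have htail' : ∀ r : ℝ, 0 ≤ r → Summable fun j => |c (n + 1 + j)| * r ^ j := by
    intro r hr
    have h2 : Summable fun j => |c (j + (n + 1))| * (r + 1) ^ (j + (n + 1)) :=
      (summable_nat_add_iff (n + 1)).2 (habs (r + 1) (by linarith))
    refine h2.of_nonneg_of_le
      (fun j => mul_nonneg (abs_nonneg _) (pow_nonneg hr j)) (fun j => ?_)
    rw [add_comm (n + 1) j]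
    refine mul_le_mul_of_nonneg_left ?_ (abs_nonneg _)
    calc r ^ j ≤ (r + 1) ^ j := pow_le_pow_left₀ hr (by linarith) j
      _ ≤ (r + 1) ^ (j + (n + 1)) :=
        pow_le_pow_right₀ (by linarith) (Nat.le_add_right _ _)
  have htail : ∀ x : ℝ, Summable fun j => c (n + 1 + j) * x ^ j := by
    intro x
    refine Summable.of_norm_bounded (htail' |x| (abs_nonneg x)) (fun j => ?_)
    rw [Real.norm_eq_abs, abs_mul, abs_pow]
  set h : ℝ → ℝ := fun x => ∑' j, c (n + 1 + j) * x ^ j with hhdef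
  have hh : ∀ x : ℝ, HasSum (fun j => c (n + 1 + j) * x ^ j) (h x) :=
    fun x => (htail x).hasSum
  set M : ℝ := ∑' j, |c (n + 1 + j)| * a ^ j with hMdef
  have hMs : Summable fun j => |c (n + 1 + j)| * a ^ j := htail' a ha.le
  have hbound : ∀ x : ℝ, |x| ≤ a → |h x| ≤ M := by
    intro x hx
    calc |h x| ≤ ∑' j, |c (n + 1 + j)| * |x| ^ j := by
          simpa [Real.norm_eq_abs, abs_mul, abs_pow] using
            norm_tsum_le_tsum_norm (f := fun j => c (n + 1 + j) * x ^ j)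
              (by simpa [Real.norm_eq_abs, abs_mul, abs_pow] using htail' |x| (abs_nonneg x))
      _ ≤ M := by
          refine Summable.tsum_le_tsum (fun j => ?_) (htail' |x| (abs_nonneg x)) hMs
          exact mul_le_mul_of_nonneg_left
            (pow_le_pow_left₀ (abs_nonneg x) hx j) (abs_nonneg _)
  have hcont : ContinuousOn h (Icc (-a) a) := by
    refine (tendstoUniformlyOn_tsum hMs (fun j x hx => ?_)).continuousOn
      (Eventually.of_forall fun t => ?_).frequently
    · rw [Real.norm_eq_abs, abs_mul, abs_pow]
      exact mul_le_mul_of_nonneg_left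
        (pow_le_pow_left₀ (abs_nonneg x) (abs_le.mpr ⟨hx.1, hx.2⟩) j) (abs_nonneg _)
    · exact (continuous_finset_sum t fun j _ =>
        continuous_const.mul (continuous_pow j)).continuousOn
  have hconta : ContinuousOn h (Icc 0 a) := hcont.mono (Icc_subset_Icc (by linarith) le_rfl)
  set S := ∫ x in (0:ℝ)..a, h x with hSdef
  refine ⟨S, ?_, ?_⟩
  · -- HasSum part
    have H := intervalIntegral.hasSum_integral_of_dominated_convergence
      (μ := volume) (a := 0) (b := a) (f := h)
      (F := fun j (t : ℝ) => c (n + 1 + j) * t ^ j)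
      (bound := fun j (_ : ℝ) => |c (n + 1 + j)| * a ^ j)
      (fun j => (continuous_const.mul (continuous_pow j)).aestronglyMeasurable)
      (fun j => ae_of_all _ fun t ht => ?_)
      (ae_of_all _ fun t _ => hMs)
      (by simpa using intervalIntegrable_const (c := M) (μ := volume) (a := 0) (b := a))
      (ae_of_all _ fun t _ => hh t)
    · have hval : ∀ j : ℕ, (∫ t in (0:ℝ)..a, c (n + 1 + j) * t ^ j)
          = c (n + 1 + j) * a ^ (j + 1) / (j + 1) := by
        intro j
        rw [intervalIntegral.integral_const_mul, integral_pow]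
        push_cast
        ring_nf
      simpa [hval] using H
    · rw [Set.uIoc_of_le ha.le] at ht
      rw [Real.norm_eq_abs, abs_mul, abs_pow]
      refine mul_le_mul_of_nonneg_left ?_ (abs_nonneg _)
      rw [abs_of_pos ht.1]
      exact pow_le_pow_left₀ ht.1.le ht.2 j
  · -- Tendsto part
    set D : ℝ → ℝ := fun t => ∑ k ∈ Finset.range n,
      c k / (((n - k : ℕ) : ℝ) * t ^ (n - k)) with hDdef
    have hDeq : ∀ t : ℝ, (∑ k ∈ Finset.range (n + 1 - 1),
        c k / (((n + 1 - k - 1 : ℕ) : ℝ) * t ^ (n + 1 - k - 1))) = D t := by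
      intro t
      rw [hDdef]
      simp only [Nat.add_sub_cancel]
      exact Finset.sum_congr rfl fun k hk => by rw [show n + 1 - k - 1 = n - k by omega]
    -- pointwise decomposition of the integrand
    have hptw : ∀ x : ℝ, 0 < x →
        f x / x ^ (n + 1) = (∑ k ∈ Finset.range n, c k * x ^ ((k : ℤ) - (n + 1)))
          + (c n * x⁻¹ + h x) := by
      intro x hx
      have hx0 : x ≠ 0 := hx.ne'
      have t2 : HasSum (fun j => c (j + (n + 1)) * x ^ (j + (n + 1))) (x ^ (n + 1) * h x) := by
        have h2 := (hh x).mul_left (x ^ (n + 1))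
        convert h2 using 2 with j
        · rfl
        rw [add_comm j (n + 1), pow_add]
        ring
      have hfxe : f x = (∑ k ∈ Finset.range (n + 1), c k * x ^ k) + x ^ (n + 1) * h x := by
        have hsplit := Summable.sum_add_tsum_nat_add (f := fun k => c k * x ^ k) (n + 1) (hs x).summable
        rw [t2.tsum_eq] at hsplit
        rw [← (hs x).tsum_eq, ← hsplit]
      rw [hfxe, add_div, mul_div_cancel_left₀ _ (pow_ne_zero (n + 1) hx0),
        Finset.sum_range_succ, add_div, Finset.sum_div]
      have hzp : ∀ k : ℕ, c k * x ^ k / x ^ (n + 1) = c k * x ^ ((k : ℤ) - (n + 1)) := by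
        intro k
        rw [mul_div_assoc, zpow_sub₀ hx0]
        norm_cast
      have hlast : c n * x ^ n / x ^ (n + 1) = c n * x⁻¹ := by
        rw [mul_div_assoc, pow_succ, div_mul_eq_div_div, div_self (pow_ne_zero n hx0),
          one_div]
      rw [hlast]
      rw [Finset.sum_congr rfl fun k _ => hzp k]
      ring
    have hIh : ∀ b₁ b₂ : ℝ, b₁ ∈ Icc (0:ℝ) a → b₂ ∈ Icc (0:ℝ) a →
        IntervalIntegrable h volume b₁ b₂ := fun b₁ b₂ h₁ h₂ =>
      (hconta.mono (uIcc_subset_Icc h₁ h₂)).intervalIntegrable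
    have hkey : ∀ ε : ℝ, 0 < ε → ε < a →
        (∫ x in ε..a, f x / x ^ (n + 1))
          = (D ε - D a) + (c n * (Real.log a - Real.log ε) + ∫ x in ε..a, h x) := by
      intro ε hε hεa
      have hne : ∀ x ∈ uIcc ε a, x ≠ 0 := by
        intro x hx
        rw [uIcc_of_le hεa.le] at hx
        exact (lt_of_lt_of_le hε hx.1).ne'
      have hpos : ∀ x ∈ uIcc ε a, 0 < x := by
        intro x hx
        rw [uIcc_of_le hεa.le] at hx
        exact lt_of_lt_of_le hε hx.1
      have hIsum : ∀ k ∈ Finset.range n, IntervalIntegrable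
          (fun x : ℝ => c k * x ^ ((k : ℤ) - (n + 1))) volume ε a := by
        intro k _
        exact (continuousOn_const.mul ((continuousOn_zpow₀ _).mono
          (fun x hx => by simpa using hne x hx))).intervalIntegrable
      have hIS : IntervalIntegrable
          (fun x : ℝ => ∑ k ∈ Finset.range n, c k * x ^ ((k : ℤ) - (n + 1))) volume ε a := by
        have h0 := IntervalIntegrable.sum (μ := volume) (a := ε) (b := a)
          (Finset.range n) hIsum
        simpa [Finset.sum_fn] using h0
      have hIinv : IntervalIntegrable (fun x : ℝ => c n * x⁻¹) volume ε a :=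
        (continuousOn_const.mul (continuousOn_inv₀.mono
          (fun x hx => by simpa using hne x hx))).intervalIntegrable
      have hIhh : IntervalIntegrable h volume ε a :=
        hIh ε a ⟨hε.le, hεa.le⟩ ⟨ha.le, le_rfl⟩
      rw [intervalIntegral.integral_congr (fun x hx => hptw x (hpos x hx)),
        intervalIntegral.integral_add hIS (hIinv.add hIhh),
        intervalIntegral.integral_add hIinv hIhh,
        intervalIntegral.integral_finset_sum hIsum,
        intervalIntegral.integral_const_mul,
        integral_inv (notMem_uIcc_of_lt hε ha)]
      have hterm : ∀ k ∈ Finset.range n,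
          (∫ x in ε..a, c k * x ^ ((k : ℤ) - (n + 1)))
            = c k / (((n - k : ℕ) : ℝ) * ε ^ (n - k))
              - c k / (((n - k : ℕ) : ℝ) * a ^ (n - k)) := by
        intro k hk
        have hkn : k < n := Finset.mem_range.mp hk
        rw [intervalIntegral.integral_const_mul,
          integral_zpow (Or.inr ⟨by omega, notMem_uIcc_of_lt hε ha⟩),
          show (k : ℤ) - (n + 1) + 1 = -((n - k : ℕ) : ℤ) by push_cast; omega,
          zpow_neg, zpow_neg, zpow_natCast, zpow_natCast,
          show ((((k : ℤ) - (n + 1) : ℤ)) : ℝ) + 1 = -((n - k : ℕ) : ℝ) by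
            rw [Nat.cast_sub hkn.le]; push_cast; ring]
        have h1 : ((n - k : ℕ) : ℝ) ≠ 0 := Nat.cast_ne_zero.mpr (by omega)
        have h2 : ε ^ (n - k) ≠ 0 := pow_ne_zero _ hε.ne'
        have h3 : a ^ (n - k) ≠ 0 := pow_ne_zero _ ha.ne'
        field_simp
        ring
      rw [Finset.sum_congr rfl hterm]
      rw [Finset.sum_sub_distrib]
      rw [Real.log_div ha.ne' hε.ne']
    have hI0 : Tendsto (fun ε : ℝ => ∫ x in (0:ℝ)..ε, h x)
        (nhdsWithin 0 (Ioi 0)) (nhds 0) := by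
      have hb : ∀ᶠ ε in nhdsWithin (0:ℝ) (Ioi 0),
          ‖∫ x in (0:ℝ)..ε, h x‖ ≤ M * |ε| := by
        filter_upwards [Ioo_mem_nhdsGT_of_mem (⟨le_rfl, ha⟩ : (0:ℝ) ∈ Ico 0 a)]
          with ε hε
        have hbd : ∀ x ∈ Set.uIoc (0:ℝ) ε, ‖h x‖ ≤ M := by
          intro x hx
          rw [uIoc_of_le hε.1.le] at hx
          refine hbound x ?_
          rw [abs_of_pos hx.1]
          exact hx.2.trans hε.2.le
        simpa [sub_zero] using
          intervalIntegral.norm_integral_le_of_norm_le_const (C := M) hbd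
      have h1 : Tendsto (fun ε : ℝ => M * |ε|) (nhds 0) (nhds (M * |0|)) :=
        (continuous_const.mul continuous_abs).tendsto 0
      simp only [abs_zero, mul_zero] at h1
      exact squeeze_zero_norm' hb (h1.mono_left nhdsWithin_le_nhds)
    have hfinal : Tendsto
        (fun ε : ℝ => (c n * Real.log a - D a + S) - ∫ x in (0:ℝ)..ε, h x)
        (nhdsWithin 0 (Ioi 0)) (nhds ((c n * Real.log a - D a + S) - 0)) :=
      tendsto_const_nhds.sub hI0
    rw [sub_zero] at hfinal
    have hgoalpt : c (n + 1 - 1) * Real.log a -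
        (∑ k ∈ Finset.range (n + 1 - 1),
          c k / (((n + 1 - k - 1 : ℕ) : ℝ) * a ^ (n + 1 - k - 1))) + S
        = c n * Real.log a - D a + S := by
      rw [hDeq a, Nat.add_sub_cancel]
    rw [hgoalpt]
    refine Tendsto.congr' ?_ hfinal
    filter_upwards [Ioo_mem_nhdsGT_of_mem (⟨le_rfl, ha⟩ : (0:ℝ) ∈ Ico 0 a)] with ε hε
    have hadj : (∫ x in (0:ℝ)..ε, h x) + ∫ x in ε..a, h x = S :=
      intervalIntegral.integral_add_adjacent_intervals
        (hIh 0 ε ⟨le_rfl, ha.le⟩ ⟨hε.1.le, hε.2.le⟩)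
        (hIh ε a ⟨hε.1.le, hε.2.le⟩ ⟨ha.le, le_rfl⟩)
    rw [hkey ε hε.1 hε.2, hDeq ε, Nat.add_sub_cancel]
    linarith [hadj]
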